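/- Let X be a Hilbert space, L : X → X* bounded self-dual, and suppose there exists a vector w ∈ X with ⟨Lw, w⟩ < 0 and a closed hyperplane X̄ = {ρ ∈ X : ⟨Lw, ρ⟩ = 0}. Then X = X̄ ⊕ span{w} and n⁻(L) = n⁻(L|_{X̄}) + 1. -/

import Mathlib

open RealInnerProductSpace

variable {H : Type*} [NormedAddCommGroup H] [InnerProductSpace ℝ H]

/-- The set of dimensions of subspaces of `W` on which the quadratic form of `L` is
negative definite. -/
def negSet (L : H →L[ℝ] H) (W : Submodule ℝ H) : Set ℕ :=
  {n : ℕ | ∃ V : Submodule ℝ H, V ≤ W ∧ (∀ u ∈ V, u ≠ 0 → ⟪L u, u⟫ < (0:ℝ)) ∧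
    Module.finrank ℝ V = n}

/-- Negative Morse index of `L` restricted to `W`. -/
noncomputable def negIdxOn (L : H →L[ℝ] H) (W : Submodule ℝ H) : ℕ :=
  sSup (negSet L W)

/-- If ⟪Lw,w⟫ < 0 and X̄ = {ρ : ⟪Lw,ρ⟫ = 0}, then X = X̄ ⊕ span{w} and
n⁻(L) = n⁻(L|_{X̄}) + 1. -/
lemma zero_mem_negSet (L : H →L[ℝ] H) (W : Submodule ℝ H) : 0 ∈ negSet L W := by
  refine ⟨⊥, bot_le, ?_, finrank_bot ℝ H⟩
  intro u hu hu0
  exact absurd ((Submodule.mem_bot ℝ).mp hu) hu0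

lemma expand_aux (L : H →L[ℝ] H) (hsym : ∀ u v, ⟪L u, v⟫ = ⟪u, L v⟫)
    (w v : H) (hv : ⟪L w, v⟫ = 0) (c : ℝ) :
    ⟪L (v + c • w), v + c • w⟫ = ⟪L v, v⟫ + c^2 * ⟪L w, w⟫ := by
  have h1 : ⟪L v, w⟫ = 0 := by rw [hsym, real_inner_comm]; exact hv
  simp only [map_add, map_smul, inner_add_left, inner_add_right, real_inner_smul_left,
    real_inner_smul_right, ContinuousLinearMap.coe_smul', Pi.smul_apply, smul_eq_mul, h1, hv]
  ring

theorem stmt_15 [CompleteSpace H] (L : H →L[ℝ] H)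
    (hsym : ∀ u v, ⟪L u, v⟫ = ⟪u, L v⟫)
    (hfin : BddAbove (negSet L ⊤))
    (w : H) (hw : ⟪L w, w⟫ < (0:ℝ))
    (Xbar : Submodule ℝ H)
    (hXbar : ∀ ρ, ρ ∈ Xbar ↔ ⟪L w, ρ⟫ = (0:ℝ)) :
    IsCompl Xbar (Submodule.span ℝ {w}) ∧
      negIdxOn L ⊤ = negIdxOn L Xbar + 1 := by
  have hww : ⟪L w, w⟫ ≠ 0 := ne_of_lt hw
  have hwne : w ≠ 0 := by
    intro h; rw [h] at hw; simp at hw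
  have hwX : w ∉ Xbar := fun h => hww ((hXbar w).mp h)
  -- decomposition
  have hdecomp : ∀ x : H, x - (⟪L w, x⟫ / ⟪L w, w⟫) • w ∈ Xbar := by
    intro x
    rw [hXbar]
    rw [inner_sub_right, real_inner_smul_right]
    field_simp
    ring
  have hcompl : IsCompl Xbar (Submodule.span ℝ {w}) := by
    constructor
    · rw [disjoint_iff_inf_le]
      intro x ⟨hx1, hx2⟩
      obtain ⟨c, rfl⟩ := Submodule.mem_span_singleton.mp hx2
      have : ⟪L w, c • w⟫ = 0 := (hXbar _).mp hx1
      rw [real_inner_smul_right] at this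
      rcases mul_eq_zero.mp this with h | h
      · simp [h]
      · exact absurd h hww
    · rw [codisjoint_iff_le_sup]
      intro x _
      refine Submodule.mem_sup.mpr ⟨x - (⟪L w, x⟫ / ⟪L w, w⟫) • w, hdecomp x,
        (⟪L w, x⟫ / ⟪L w, w⟫) • w, Submodule.mem_span_singleton.mpr ⟨_, rfl⟩, by abel⟩
  refine ⟨hcompl, ?_⟩
  have hsub : negSet L Xbar ⊆ negSet L ⊤ := by
    rintro n ⟨V, _, hneg, hrk⟩; exact ⟨V, le_top, hneg, hrk⟩
  have hbarbdd : BddAbove (negSet L Xbar) := hfin.mono hsub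
  have hbarne : (negSet L Xbar).Nonempty := ⟨0, zero_mem_negSet L Xbar⟩
  have htopne : (negSet L ⊤).Nonempty := ⟨0, zero_mem_negSet L ⊤⟩
  -- span w is negative definite
  have hspanneg : ∀ u ∈ Submodule.span ℝ {w}, u ≠ 0 → ⟪L u, u⟫ < (0:ℝ) := by
    intro u hu hu0
    obtain ⟨c, rfl⟩ := Submodule.mem_span_singleton.mp hu
    have hc : c ≠ 0 := fun h => hu0 (by simp [h])
    calc ⟪L (c • w), c • w⟫ = c^2 * ⟪L w, w⟫ := by
          rw [map_smul]; simp [real_inner_smul_left, real_inner_smul_right]; ring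
      _ < 0 := mul_neg_of_pos_of_neg (by positivity) hw
  -- ≥ direction : negIdxOn L Xbar + 1 ∈ negSet L ⊤
  have hge : negIdxOn L Xbar + 1 ∈ negSet L ⊤ := by
    obtain ⟨V, hVle, hVneg, hVrk⟩ := Nat.sSup_mem hbarne hbarbdd
    set n := negIdxOn L Xbar with hn
    rcases Nat.eq_zero_or_pos n with h0 | hpos
    · rw [h0]
      exact ⟨Submodule.span ℝ {w}, le_top, hspanneg, finrank_span_singleton hwne⟩
    · have : FiniteDimensional ℝ V := Module.finite_of_finrank_pos (hVrk ▸ hpos)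
      have hwV : Disjoint V (Submodule.span ℝ {w}) :=
        hcompl.1.mono_left hVle
      refine ⟨V ⊔ Submodule.span ℝ {w}, le_top, ?_, ?_⟩
      · intro u hu hu0
        obtain ⟨v, hv, z, hz, rfl⟩ := Submodule.mem_sup.mp hu
        obtain ⟨c, rfl⟩ := Submodule.mem_span_singleton.mp hz
        have hvx : ⟪L w, v⟫ = 0 := (hXbar v).mp (hVle hv)
        rw [expand_aux L hsym w v hvx c]
        rcases eq_or_ne v 0 with rfl | hv0
        · have hc : c ≠ 0 := fun h => hu0 (by simp [h])
          simpa using mul_neg_of_pos_of_neg (by positivity : (0:ℝ) < c^2) hw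
        · have h1 : ⟪L v, v⟫ < 0 := hVneg v hv hv0
          have h2 : c^2 * ⟪L w, w⟫ ≤ 0 :=
            mul_nonpos_of_nonneg_of_nonpos (sq_nonneg c) hw.le
          linarith
      · have hinf : V ⊓ Submodule.span ℝ {w} = ⊥ := disjoint_iff.mp hwV
        have := Submodule.finrank_sup_add_finrank_inf_eq V (Submodule.span ℝ {w})
        rw [hinf, finrank_span_singleton hwne, hVrk] at this
        simpa [hn, negIdxOn] using this
  -- ≤ direction
  have hle : ∀ m ∈ negSet L ⊤, m ≤ negIdxOn L Xbar + 1 := by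
    rintro m ⟨V, _, hVneg, hVrk⟩
    rcases Nat.eq_zero_or_pos m with h0 | hpos
    · omega
    have : FiniteDimensional ℝ V := Module.finite_of_finrank_pos (hVrk ▸ hpos)
    set g : V →ₗ[ℝ] ℝ :=
      { toFun := fun v => ⟪L w, (v : H)⟫
        map_add' := by intro a b; simp [inner_add_right]
        map_smul' := by intro c a; simp [real_inner_smul_right] }
    have hker : Module.finrank ℝ V ≤ Module.finrank ℝ (LinearMap.ker g) + 1 := by
      have h1 := LinearMap.finrank_range_add_finrank_ker g
      have h2 : Module.finrank ℝ (LinearMap.range g) ≤ 1 := by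
        simpa using Submodule.finrank_le (LinearMap.range g)
      omega
    set W' := (LinearMap.ker g).map V.subtype
    have hW'le : W' ≤ Xbar := by
      rintro x ⟨⟨y, hy⟩, hmem, rfl⟩
      exact (hXbar _).mpr hmem
    have hW'neg : ∀ u ∈ W', u ≠ 0 → ⟪L u, u⟫ < (0:ℝ) := by
      rintro u ⟨⟨y, hy⟩, _, rfl⟩ hu0
      exact hVneg _ hy hu0
    have hW'rk : Module.finrank ℝ W' = Module.finrank ℝ (LinearMap.ker g) :=
      Submodule.finrank_map_subtype_eq V _
    have hmem : Module.finrank ℝ W' ∈ negSet L Xbar := ⟨W', hW'le, hW'neg, rfl⟩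
    have := le_csSup hbarbdd hmem
    rw [hW'rk] at this
    unfold negIdxOn
    omega
  have h1 : negIdxOn L ⊤ ≤ negIdxOn L Xbar + 1 :=
    hle _ (Nat.sSup_mem htopne hfin)
  have h2 : negIdxOn L Xbar + 1 ≤ negIdxOn L ⊤ := le_csSup hfin hge
  omega
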